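/- Let x = (x¹,…,xᵏ) ∈ ℝ^{n×k} be a centroid system with pairwise distinct centroids and let {A¹,…,Aᵏ} be the natural clustering associated with x. Define the updated centroids by x̃ʲ = barycenter of Aʲ if Aʲ ≠ ∅ and x̃ʲ = xʲ if Aʲ = ∅. Then the new centroids x̃¹,…,x̃ᵏ are pairwise distinct. -/
import Mathlib


/-- The cluster index of a point `p` in the natural clustering associated with the
centroid system `x`: the smallest `j` minimizing `‖p - x j‖`. -/
noncomputable def natIdx {n k : ℕ} [NeZero k] (p : EuclideanSpace ℝ (Fin n))
    (x : Fin k → EuclideanSpace ℝ (Fin n)) : Fin k :=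
  (Finset.univ.filter fun j =>
      ‖p - x j‖ = Finset.univ.inf' Finset.univ_nonempty fun q => ‖p - x q‖).min' (by
    obtain ⟨b, _, hb⟩ := Finset.exists_mem_eq_inf' (Finset.univ_nonempty)
      (fun q => ‖p - x q‖)
    exact ⟨b, Finset.mem_filter.mpr ⟨Finset.mem_univ b, hb.symm⟩⟩)

lemma natIdx_le {n k : ℕ} [NeZero k] (p : EuclideanSpace ℝ (Fin n))
    (x : Fin k → EuclideanSpace ℝ (Fin n)) (q : Fin k) :
    ‖p - x (natIdx p x)‖ ≤ ‖p - x q‖ := by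
  have hmem := Finset.min'_mem _ (id (by
    obtain ⟨b, _, hb⟩ := Finset.exists_mem_eq_inf' (Finset.univ_nonempty)
      (fun q => ‖p - x q‖)
    exact ⟨b, Finset.mem_filter.mpr ⟨Finset.mem_univ b, hb.symm⟩⟩ : (Finset.univ.filter fun j =>
      ‖p - x j‖ = Finset.univ.inf' Finset.univ_nonempty fun q => ‖p - x q‖).Nonempty))
  rw [Finset.mem_filter] at hmem
  rw [show (Finset.univ.filter fun j =>
      ‖p - x j‖ = Finset.univ.inf' Finset.univ_nonempty fun q => ‖p - x q‖).min' _ = natIdx p x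
    from rfl] at hmem
  rw [hmem.2]
  exact Finset.inf'_le _ (Finset.mem_univ q)

lemma natIdx_lt {n k : ℕ} [NeZero k] (p : EuclideanSpace ℝ (Fin n))
    (x : Fin k → EuclideanSpace ℝ (Fin n)) (q : Fin k) (hq : q < natIdx p x) :
    ‖p - x (natIdx p x)‖ < ‖p - x q‖ := by
  rcases lt_or_ge ‖p - x (natIdx p x)‖ ‖p - x q‖ with h | h
  · exact h
  · exfalso
    have h1 := natIdx_le p x q
    have heq : ‖p - x q‖ = ‖p - x (natIdx p x)‖ := le_antisymm h h1
    have hinf : ‖p - x (natIdx p x)‖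
        = Finset.univ.inf' Finset.univ_nonempty fun r => ‖p - x r‖ := by
      apply le_antisymm
      · obtain ⟨b, _, hb⟩ := Finset.exists_mem_eq_inf' (Finset.univ_nonempty)
          (fun r => ‖p - x r‖)
        rw [hb]; exact natIdx_le p x b
      · exact Finset.inf'_le _ (Finset.mem_univ _)
    have hqmem : q ∈ Finset.univ.filter fun j =>
        ‖p - x j‖ = Finset.univ.inf' Finset.univ_nonempty fun r => ‖p - x r‖ :=
      Finset.mem_filter.mpr ⟨Finset.mem_univ q, heq.trans hinf⟩
    have := Finset.min'_le _ q hqmem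
    exact absurd this (not_le.mpr hq)

/-- The cluster `Aʲ` (as a set of indices of data points) of the natural clustering. -/
noncomputable def natCluster {n m k : ℕ} [NeZero k] (a : Fin m → EuclideanSpace ℝ (Fin n))
    (x : Fin k → EuclideanSpace ℝ (Fin n)) (j : Fin k) : Finset (Fin m) :=
  Finset.univ.filter fun i => natIdx (a i) x = j

/-- One step of the k-means update: each centroid whose cluster is nonempty is replaced
by the barycenter of its cluster; other centroids are unchanged. -/
noncomputable def kmeansStep {n m k : ℕ} [NeZero k] (a : Fin m → EuclideanSpace ℝ (Fin n))
    (x : Fin k → EuclideanSpace ℝ (Fin n)) : Fin k → EuclideanSpace ℝ (Fin n) :=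
  fun j =>
    if (natCluster a x j).Nonempty then
      ((natCluster a x j).card : ℝ)⁻¹ • ∑ i ∈ natCluster a x j, a i
    else x j

open RealInnerProductSpace

/-- If the centroids `x¹,…,xᵏ` are pairwise distinct, then after one step of the
k-means algorithm the updated centroids are still pairwise distinct. -/
theorem stmt16 {n m k : ℕ} [NeZero k]
    (a : Fin m → EuclideanSpace ℝ (Fin n))
    (x : Fin k → EuclideanSpace ℝ (Fin n))
    (hx : ∀ j₁ j₂ : Fin k, j₁ ≠ j₂ → x j₁ ≠ x j₂) :
    ∀ j₁ j₂ : Fin k, j₁ ≠ j₂ → kmeansStep a x j₁ ≠ kmeansStep a x j₂ := by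
  have main : ∀ j₁ j₂ : Fin k, j₁ < j₂ → kmeansStep a x j₁ ≠ kmeansStep a x j₂ := by
    intro j₁ j₂ hlt
    have hne : x j₁ ≠ x j₂ := hx j₁ j₂ (ne_of_lt hlt)
    set v : EuclideanSpace ℝ (Fin n) := x j₁ - x j₂ with hv
    have hvpos : (0:ℝ) < ‖v‖^2 :=
      pow_pos (norm_pos_iff.mpr (sub_ne_zero.mpr hne)) 2
    set c : ℝ := (‖x j₁‖^2 - ‖x j₂‖^2) / 2 with hc
    -- pointwise facts
    have key1 : ∀ p : EuclideanSpace ℝ (Fin n),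
        ‖p - x j₁‖ ≤ ‖p - x j₂‖ → c ≤ ⟪p, v⟫ := by
      intro p h
      have hsq : ‖p - x j₁‖^2 ≤ ‖p - x j₂‖^2 :=
        pow_le_pow_left₀ (norm_nonneg _) h 2
      rw [norm_sub_sq_real, norm_sub_sq_real] at hsq
      rw [hv, inner_sub_right, hc]
      linarith
    have key2 : ∀ p : EuclideanSpace ℝ (Fin n),
        ‖p - x j₂‖ < ‖p - x j₁‖ → ⟪p, v⟫ < c := by
      intro p h
      have hsq : ‖p - x j₂‖^2 < ‖p - x j₁‖^2 := by
        apply pow_lt_pow_left₀ h (norm_nonneg _); norm_num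
      rw [norm_sub_sq_real, norm_sub_sq_real] at hsq
      rw [hv, inner_sub_right, hc]
      linarith
    -- value at updated centroid j₁ is ≥ c
    have h1 : c ≤ ⟪kmeansStep a x j₁, v⟫ := by
      unfold kmeansStep
      split_ifs with hemp
      · rw [real_inner_smul_left, sum_inner]
        have hcard : (0:ℝ) < (natCluster a x j₁).card := by
          exact_mod_cast Finset.card_pos.mpr hemp
        have hsum : (natCluster a x j₁).card • c ≤ ∑ i ∈ natCluster a x j₁, ⟪a i, v⟫ := by
          apply Finset.card_nsmul_le_sum
          intro i hi
          apply key1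
          have hidx : natIdx (a i) x = j₁ := (Finset.mem_filter.mp hi).2
          have := natIdx_le (a i) x j₂
          rwa [hidx] at this
        rw [nsmul_eq_mul] at hsum
        rw [inv_mul_eq_div, le_div_iff₀ hcard]
        linarith
      · apply key1
        simp only [sub_self, norm_zero]
        exact norm_nonneg _
    -- value at updated centroid j₂ is < c
    have h2 : ⟪kmeansStep a x j₂, v⟫ < c := by
      unfold kmeansStep
      split_ifs with hemp
      · rw [real_inner_smul_left, sum_inner]
        have hcard : (0:ℝ) < (natCluster a x j₂).card := by
          exact_mod_cast Finset.card_pos.mpr hemp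
        have hsum : ∑ i ∈ natCluster a x j₂, ⟪a i, v⟫ < (natCluster a x j₂).card • c := by
          calc ∑ i ∈ natCluster a x j₂, ⟪a i, v⟫
              < ∑ _i ∈ natCluster a x j₂, c := by
                apply Finset.sum_lt_sum_of_nonempty hemp
                intro i hi
                apply key2
                have hidx : natIdx (a i) x = j₂ := (Finset.mem_filter.mp hi).2
                have := natIdx_lt (a i) x j₁ (by rw [hidx]; exact hlt)
                rwa [hidx] at this
            _ = (natCluster a x j₂).card • c := by rw [Finset.sum_const]
        rw [nsmul_eq_mul] at hsum
        rw [inv_mul_eq_div, div_lt_iff₀ hcard]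
        linarith
      · apply key2
        have : x j₂ - x j₁ ≠ 0 := sub_ne_zero.mpr (hx j₂ j₁ (ne_of_gt hlt))
        simp only [sub_self, norm_zero]
        exact norm_pos_iff.mpr this
    intro heq
    rw [heq] at h1
    exact absurd h1 (not_le.mpr h2)
  intro j₁ j₂ hne
  rcases lt_or_gt_of_ne hne with h | h
  · exact main j₁ j₂ h
  · exact (main j₂ j₁ h).symm
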